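/- Let R be a finitely generated subring of a number field k, viewed inside ℂ via a fixed embedding of k into ℂ. Let β be an element of R, and set A = { m + nβ : m, n ∈ ℤ } and B = { m + nβ : m, n ∈ ℚ }. If b is an element of R with b ∉ B, then there exist a finite ring S and a ring homomorphism η : R → S such that η(b) ∉ η(A). -/

import Mathlib

set_option synthInstance.maxHeartbeats 400000
set_option maxHeartbeats 800000

/-- Let `R` be a finitely generated subring of a number field `k`, viewed inside `ℂ`
via a fixed embedding `ι : k → ℂ`.  Let `β ∈ R`, and set `A = {m + nβ : m, n ∈ ℤ}` and
`B = {m + nβ : m, n ∈ ℚ}`.  If `b ∈ R` and `b ∉ B`, then there exist a finite ring `S`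
and a ring homomorphism `η : R → S` such that `η b ∉ η '' A`. -/
theorem finite_ring_quotient_separating_from_integer_lattice
    (k : Type) [Field k] [NumberField k] (ι : k →+* ℂ)
    (R : Subring k) (hR : ∃ s : Finset k, R = Subring.closure ↑s)
    (β : ↥R) (b : ↥R)
    (hb : (b : k) ∉ {x : k | ∃ m n : ℚ, x = (m : k) + (n : k) * (β : k)}) :
    ∃ (S : Type) (_ : CommRing S) (_ : Finite S) (η : ↥R →+* S),
      η b ∉ η '' {x : ↥R | ∃ m n : ℤ, (x : k) = (m : k) + (n : k) * (β : k)} := by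
  classical
  obtain ⟨s, hs⟩ := hR
  -- a linear functional vanishing on span {1, β} with f b = 1
  have hbW : (b : k) ∉ Submodule.span ℚ ({1, (β : k)} : Set k) := by
    intro h
    obtain ⟨m, n, hmn⟩ := Submodule.mem_span_pair.mp h
    exact hb ⟨m, n, by rw [← hmn, Rat.smul_def, Rat.smul_def, mul_one]⟩
  obtain ⟨f0, hf0b, hf0W⟩ :=
    Submodule.exists_dual_map_eq_bot_of_notMem hbW inferInstance
  set f : k →ₗ[ℚ] ℚ := (f0 (b : k))⁻¹ • f0 with hfdef
  have hker : ∀ x ∈ Submodule.span ℚ ({1, (β : k)} : Set k), f x = 0 := by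
    intro x hx
    have h0 : f0 x = 0 := by
      have hmem : f0 x ∈ (Submodule.span ℚ ({1, (β : k)} : Set k)).map f0 :=
        Submodule.mem_map_of_mem hx
      rwa [hf0W, Submodule.mem_bot] at hmem
    simp [hfdef, h0]
  have hf1 : f 1 = 0 := hker 1 (Submodule.subset_span (by simp))
  have hfβ : f (β : k) = 0 := hker _ (Submodule.subset_span (by simp))
  have hfb : f (b : k) = 1 := by
    simp [hfdef, inv_mul_cancel₀ hf0b]
  -- a basis of k over ℚ
  set d := Module.finrank ℚ k with hd
  set w : Module.Basis (Fin d) ℚ k := Module.finBasis ℚ k with hw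
  -- collect all relevant denominators
  set D : Finset ℕ :=
      (((Finset.univ : Finset (Fin d × Fin d × Fin d)).image
          fun t => ((w.repr (w t.1 * w t.2.1)) t.2.2).den) ∪
        ((Finset.univ : Finset (Fin d)).image fun i => ((w.repr 1) i).den) ∪
        ((Finset.univ : Finset (Fin d)).image fun i => (f (w i)).den)) ∪
        (s.biUnion fun g => (Finset.univ : Finset (Fin d)).image
          fun i => ((w.repr g) i).den) with hD
  have hD1 : ∀ i j l : Fin d, ((w.repr (w i * w j)) l).den ∈ D := by
    intro i j l
    simp only [hD, Finset.mem_union, Finset.mem_image, Finset.mem_biUnion, Finset.mem_univ,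
      true_and]
    exact Or.inl (Or.inl (Or.inl ⟨(i, j, l), rfl⟩))
  have hD2 : ∀ i : Fin d, ((w.repr 1) i).den ∈ D := by
    intro i
    simp only [hD, Finset.mem_union, Finset.mem_image, Finset.mem_biUnion, Finset.mem_univ,
      true_and]
    exact Or.inl (Or.inl (Or.inr ⟨i, rfl⟩))
  have hD3 : ∀ i : Fin d, (f (w i)).den ∈ D := by
    intro i
    simp only [hD, Finset.mem_union, Finset.mem_image, Finset.mem_biUnion, Finset.mem_univ,
      true_and]
    exact Or.inl (Or.inr ⟨i, rfl⟩)
  have hD4 : ∀ g ∈ s, ∀ i : Fin d, ((w.repr g) i).den ∈ D := by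
    intro g hg i
    simp only [hD, Finset.mem_union, Finset.mem_image, Finset.mem_biUnion, Finset.mem_univ,
      true_and]
    exact Or.inr ⟨g, hg, i, rfl⟩
  have hDpos : ∀ n ∈ D, 0 < n := by
    intro n hn
    simp only [hD, Finset.mem_union, Finset.mem_image, Finset.mem_biUnion, Finset.mem_univ,
      true_and] at hn
    rcases hn with ((⟨t, rfl⟩ | ⟨i, rfl⟩) | ⟨i, rfl⟩) | ⟨g, hg, i, rfl⟩ <;> exact Rat.den_pos _
  set N : ℕ := ∏ n ∈ D, n with hN
  have hNpos : 0 < N := Finset.prod_pos hDpos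
  obtain ⟨p, hpge, hpp⟩ := Nat.exists_infinite_primes (N + 1)
  have hpD : ∀ q : ℚ, q.den ∈ D → ¬ p ∣ q.den := by
    intro q hq hdvd
    have h1 : p ∣ N := hdvd.trans (Finset.dvd_prod_of_mem (fun n => n) hq)
    have := Nat.le_of_dvd hNpos h1
    omega
  -- the subring of p-integral rationals
  have hpmul : ∀ m m' : ℕ, ¬ p ∣ m → ¬ p ∣ m' → ¬ p ∣ m * m' := by
    intro m m' hm hm' h
    rcases (Nat.Prime.dvd_mul hpp).mp h with h | h
    exacts [hm h, hm' h]
  set C : Subring ℚ :=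
    { carrier := {q : ℚ | ∃ a : ℤ, ∃ m : ℕ, ¬ p ∣ m ∧ q = (a : ℚ) / (m : ℚ)}
      zero_mem' := ⟨0, 1, fun h => hpp.ne_one (Nat.dvd_one.mp h), by norm_num⟩
      one_mem' := ⟨1, 1, fun h => hpp.ne_one (Nat.dvd_one.mp h), by norm_num⟩
      add_mem' := by
        rintro q r ⟨a, m, hm, rfl⟩ ⟨a', m', hm', rfl⟩
        have hm0 : (m : ℚ) ≠ 0 := Nat.cast_ne_zero.mpr fun h => hm (h ▸ dvd_zero p)
        have hm'0 : (m' : ℚ) ≠ 0 := Nat.cast_ne_zero.mpr fun h => hm' (h ▸ dvd_zero p)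
        refine ⟨a * m' + a' * m, m * m', hpmul m m' hm hm', ?_⟩
        push_cast
        field_simp
      neg_mem' := by
        rintro q ⟨a, m, hm, rfl⟩
        exact ⟨-a, m, hm, by push_cast; ring⟩
      mul_mem' := by
        rintro q r ⟨a, m, hm, rfl⟩ ⟨a', m', hm', rfl⟩
        refine ⟨a * a', m * m', hpmul m m' hm hm', ?_⟩
        push_cast
        rw [div_mul_div_comm] } with hC
  have hmemC : ∀ q : ℚ, q.den ∈ D → q ∈ C := by
    intro q hq
    exact ⟨q.num, q.den, hpD q hq, (Rat.num_div_den q).symm⟩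
  -- the lattice: C-span of the basis
  set V : Submodule C k := Submodule.span C (Set.range ⇑w) with hV
  have hCsmul : ∀ (c : C) (x : k), c • x = (c : ℚ) • x := fun c x => rfl
  have hmemV : ∀ x : k, (∀ i, ((w.repr x) i).den ∈ D) → x ∈ V := by
    intro x hx
    rw [← w.sum_repr x]
    exact Submodule.sum_mem _ fun i _ =>
      Submodule.smul_mem V (⟨(w.repr x) i, hmemC _ (hx i)⟩ : C)
        (Submodule.subset_span ⟨i, rfl⟩)
  have hwmul : ∀ i j : Fin d, w i * w j ∈ V := fun i j => hmemV _ (hD1 i j)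
  have hmul : ∀ x ∈ V, ∀ y ∈ V, x * y ∈ V := by
    intro x hx y hy
    induction hy using Submodule.span_induction with
    | mem y hy =>
      obtain ⟨j, rfl⟩ := hy
      induction hx using Submodule.span_induction with
      | mem x hx => obtain ⟨i, rfl⟩ := hx; exact hwmul i j
      | zero => rw [zero_mul]; exact V.zero_mem
      | add x₁ x₂ h₁ h₂ ih₁ ih₂ => rw [add_mul]; exact V.add_mem ih₁ ih₂
      | smul c x hx ih => rw [smul_mul_assoc]; exact V.smul_mem c ih
    | zero => rw [mul_zero]; exact V.zero_mem
    | add y₁ y₂ h₁ h₂ ih₁ ih₂ => rw [mul_add]; exact V.add_mem ih₁ ih₂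
    | smul c y hy ih => rw [mul_smul_comm]; exact V.smul_mem c ih
  set Vr : Subring k :=
    { carrier := (V : Set k)
      zero_mem' := V.zero_mem
      one_mem' := hmemV 1 hD2
      add_mem' := fun hx hy => V.add_mem hx hy
      neg_mem' := fun hx => V.neg_mem hx
      mul_mem' := fun hx hy => hmul _ hx _ hy } with hVrdef
  have hVr : ∀ {x : k}, x ∈ Vr ↔ x ∈ V := Iff.rfl
  have hRV : R ≤ Vr := by
    rw [hs]
    exact Subring.closure_le.mpr fun g hg => hmemV g (hD4 g hg)
  have hfV : ∀ x ∈ V, f x ∈ C := by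
    intro x hx
    induction hx using Submodule.span_induction with
    | mem x hx => obtain ⟨i, rfl⟩ := hx; exact hmemC _ (hD3 i)
    | zero => rw [map_zero]; exact C.zero_mem
    | add x y hx hy ihx ihy => rw [map_add]; exact C.add_mem ihx ihy
    | smul c x hx ih => rw [hCsmul, map_smul, smul_eq_mul]; exact C.mul_mem c.2 ih
  -- the quotient ring
  set I : Ideal ↥Vr := Ideal.span {(p : ↥Vr)} with hI
  set incl : ↥R →+* ↥Vr := Subring.inclusion hRV with hincl
  set η : ↥R →+* (↥Vr ⧸ I) := (Ideal.Quotient.mk I).comp incl with hη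
  -- key: C-scalars become integer scalars in the quotient
  have hmk : ∀ (c : C) (x : k) (hx : x ∈ V) (hcx : c • x ∈ Vr), ∃ z : ℤ,
      Ideal.Quotient.mk I ⟨c • x, hcx⟩ =
        ((z : ℤ) : (↥Vr ⧸ I)) * Ideal.Quotient.mk I ⟨x, hVr.mpr hx⟩ := by
    intro c x hx hcx
    obtain ⟨a, m, hm, hc⟩ := c.2
    have hcop : IsCoprime (m : ℤ) (p : ℤ) := by
      rw [Int.isCoprime_iff_gcd_eq_one, Int.gcd_natCast_natCast]
      exact Nat.coprime_comm.mp ((hpp.coprime_iff_not_dvd).mpr hm)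
    obtain ⟨u, v, huv⟩ := hcop
    have hm0 : (m : ℚ) ≠ 0 := Nat.cast_ne_zero.mpr fun h => hm (h ▸ dvd_zero p)
    have hc'C : ((a * v : ℤ) : ℚ) / (m : ℚ) ∈ C := ⟨a * v, m, hm, rfl⟩
    set c' : C := ⟨((a * v : ℤ) : ℚ) / (m : ℚ), hc'C⟩ with hc'
    have hcm : c' • x ∈ Vr := hVr.mpr (V.smul_mem c' hx)
    have huvQ : (u : ℚ) * m + v * p = 1 := by exact_mod_cast huv
    have hq : (c : ℚ) = ((u * a : ℤ) : ℚ) + (p : ℚ) * ((c' : ℚ)) := by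
      rw [hc]
      show (a : ℚ) / (m : ℚ) = ((u * a : ℤ) : ℚ) + (p : ℚ) * (((a * v : ℤ) : ℚ) / (m : ℚ))
      push_cast
      rw [div_eq_iff hm0, add_mul, mul_assoc (p : ℚ), div_mul_cancel₀ _ hm0]
      linear_combination (-(a : ℚ)) * huvQ
    have hkey : (⟨c • x, hcx⟩ : ↥Vr) =
        ((u * a : ℤ) : ↥Vr) * ⟨x, hVr.mpr hx⟩ + (p : ↥Vr) * ⟨c' • x, hcm⟩ := by
      apply Subtype.ext
      push_cast
      rw [hCsmul, hCsmul, hq, add_smul, mul_smul, Rat.smul_def, Rat.smul_def, Rat.smul_def]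
      push_cast
      ring
    refine ⟨u * a, ?_⟩
    rw [hkey, map_add, map_mul, map_mul, map_intCast, map_natCast]
    have hp0 : ((p : ℕ) : (↥Vr ⧸ I)) = 0 := by
      have h' : ((p : ℕ) : (↥Vr ⧸ I)) = Ideal.Quotient.mk I ((p : ℕ) : ↥Vr) :=
        (map_natCast (Ideal.Quotient.mk I) p).symm
      rw [h']
      exact Ideal.Quotient.eq_zero_iff_mem.mpr (Ideal.mem_span_singleton_self _)
    rw [hp0, zero_mul, add_zero]
  -- S is finite
  have htor : ∀ x : ↥Vr ⧸ I, p • x = 0 := by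
    intro x
    obtain ⟨y, rfl⟩ := Ideal.Quotient.mk_surjective x
    rw [← map_nsmul, nsmul_eq_mul]
    exact Ideal.Quotient.eq_zero_iff_mem.mpr
      (Ideal.mul_mem_right _ _ (Ideal.mem_span_singleton_self _))
  set G : Fin d → (↥Vr ⧸ I) := fun i =>
    Ideal.Quotient.mk I ⟨w i, hVr.mpr (Submodule.subset_span ⟨i, rfl⟩)⟩ with hG
  have zmodMod : Module (ZMod p) (↥Vr ⧸ I) := AddCommGroup.zmodModule htor
  letI := zmodMod
  have hgen : ∀ (x : k) (hx : x ∈ V) (hm : x ∈ Vr),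
      Ideal.Quotient.mk I ⟨x, hm⟩ ∈ Submodule.span (ZMod p) (Set.range G) := by
    intro x hx
    induction hx using Submodule.span_induction with
    | mem x hx =>
      intro hm
      obtain ⟨i, rfl⟩ := hx
      refine Submodule.subset_span (Set.mem_range.mpr ⟨i, ?_⟩)
      rfl
    | zero =>
      intro hm
      rw [show (⟨0, hm⟩ : ↥Vr) = 0 from rfl, map_zero]
      exact Submodule.zero_mem _
    | add x y hx hy ihx ihy =>
      intro hm
      rw [show (⟨x + y, hm⟩ : ↥Vr) = ⟨x, hVr.mpr hx⟩ + ⟨y, hVr.mpr hy⟩ from rfl, map_add]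
      exact Submodule.add_mem _ (ihx _) (ihy _)
    | smul c x hx ih =>
      intro hm
      obtain ⟨z, hz⟩ := hmk c x hx hm
      rw [hz, show ((z : ℤ) : (↥Vr ⧸ I)) * Ideal.Quotient.mk I ⟨x, hVr.mpr hx⟩ =
        z • Ideal.Quotient.mk I ⟨x, hVr.mpr hx⟩ from (zsmul_eq_mul _ _).symm]
      exact (Submodule.span (ZMod p) (Set.range G)).toAddSubgroup.zsmul_mem (ih _) z
  haveI : Module.Finite (ZMod p) (↥Vr ⧸ I) := by
    refine ⟨⟨Finset.univ.image G, ?_⟩⟩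
    rw [Finset.coe_image, Finset.coe_univ, Set.image_univ]
    refine eq_top_iff.mpr fun x _ => ?_
    obtain ⟨y, rfl⟩ := Ideal.Quotient.mk_surjective x
    obtain ⟨x', hx'⟩ := y
    exact hgen x' hx' hx'
  haveI : NeZero p := ⟨hpp.pos.ne'⟩
  haveI hSfin : Finite (↥Vr ⧸ I) := Module.finite_of_finite (ZMod p)
  refine ⟨↥Vr ⧸ I, inferInstance, hSfin, η, ?_⟩
  rintro ⟨a, ⟨m, n, ham⟩, hae⟩
  -- hae : η a = η b ; derive a contradiction
  have hsub : (incl a : ↥Vr) - incl b ∈ I :=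
    (Ideal.Quotient.mk_eq_mk_iff_sub_mem (incl a) (incl b)).mp hae
  obtain ⟨y, hy⟩ := Ideal.mem_span_singleton'.mp hsub
  have hk : (a : k) - (b : k) = (p : k) * (y : k) := by
    have hval : (y : k) * ((p : ↥Vr) : k) = ((incl a : ↥Vr) : k) - ((incl b : ↥Vr) : k) :=
      congrArg (Subtype.val : ↥Vr → k) hy
    have hia : ((incl a : ↥Vr) : k) = (a : k) := rfl
    have hib : ((incl b : ↥Vr) : k) = (b : k) := rfl
    rw [hia, hib] at hval
    push_cast at hval
    linear_combination -hval
  have hfa : f ((a : k) - (b : k)) = -1 := by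
    rw [map_sub, ham]
    have h1 : f ((m : k)) = 0 := by
      rw [show ((m : k)) = (m : ℤ) • (1 : k) by simp, map_zsmul, hf1, smul_zero]
    have h2 : f ((n : k) * (β : k)) = 0 := by
      rw [show ((n : k) * (β : k)) = (n : ℤ) • ((β : R) : k) by simp [zsmul_eq_mul],
        map_zsmul, hfβ, smul_zero]
    rw [map_add, h1, h2, hfb]
    ring
  have hfy : f (y : k) ∈ C := hfV _ (hVr.mp y.2)
  have hcmb : (-1 : ℚ) = (p : ℚ) * f (y : k) := by
    have hps : (p : k) * (y : k) = (p : ℚ) • (y : k) := by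
      rw [Rat.smul_def]
      push_cast
      ring
    rw [← hfa, hk, hps, map_smul, smul_eq_mul]
  obtain ⟨a', m', hm', hval⟩ := hfy
  rw [hval] at hcmb
  have hm'0 : (m' : ℚ) ≠ 0 := Nat.cast_ne_zero.mpr fun h => hm' (h ▸ dvd_zero p)
  have hZ : -(m' : ℤ) = p * a' := by
    field_simp at hcmb
    exact_mod_cast hcmb
  have : (p : ℤ) ∣ (m' : ℤ) := ⟨-a', by linarith⟩
  exact hm' (Int.natCast_dvd_natCast.mp this)
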